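/- Let j be a positive integer with p² ∤ j, let v ≥ 0 be an integer, and set D = p^{2v}·j. Then for every integer n with 0 ≤ n < v, T_n(g_D) = Σ_{t=0}^{n} p^t·g_{p^{2v−2n+4t}·j}. -/

import Mathlib

/-- Action of the Hecke operators `T(p^{2n})` on Zagier's weight 3/2 forms
`g_D`, for `D = p^{2v}·j` with `p² ∤ j` and `0 ≤ n < v`. -/
theorem stmt_2 {p : ℕ} [Fact p.Prime] (hp : p ≠ 2)
    {M : Type*} [AddCommGroup M] [Module ℤ M]
    (g : ℕ → M) (T : M →ₗ[ℤ] M)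
    (hT : ∀ D : ℕ, 0 < D →
      T (g D) = (if p ^ 2 ∣ D then g (D / p ^ 2) else 0)
        + (legendreSym p (D : ℤ)) • g D + (p : ℤ) • g (p ^ 2 * D))
    (Tn : ℕ → M →ₗ[ℤ] M)
    (hTn0 : Tn 0 = LinearMap.id) (hTn1 : Tn 1 = T)
    (hTnrec : ∀ n : ℕ, Tn (n + 2) = T ∘ₗ Tn (n + 1) - (p : ℤ) • Tn n)
    (j v : ℕ) (hj : 0 < j) (hjp : ¬ p ^ 2 ∣ j)
    (D : ℕ) (hD : D = p ^ (2 * v) * j)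
    (n : ℕ) (hn : n < v) :
    Tn n (g D) =
      ∑ t ∈ Finset.range (n + 1),
        ((p : ℤ) ^ t) • g (p ^ (2 * (v - n) + 4 * t) * j) := by
  have hppos : 0 < p := (Fact.out : p.Prime).pos
  -- single application of T on g_{p^{2(m+1)} j}
  have hstep : ∀ m : ℕ, T (g (p ^ (2 * (m + 1)) * j))
      = g (p ^ (2 * m) * j) + (p : ℤ) • g (p ^ (2 * (m + 2)) * j) := by
    intro m
    have hpos : 0 < p ^ (2 * (m + 1)) * j := by positivity
    have hdvd : p ^ 2 ∣ p ^ (2 * (m + 1)) * j := ⟨p ^ (2 * m) * j, by ring⟩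
    have hleg : legendreSym p ((p ^ (2 * (m + 1)) * j : ℕ) : ℤ) = 0 := by
      rw [legendreSym.eq_zero_iff]
      push_cast
      simp [ZMod.natCast_self]
    have e1 : p ^ (2 * (m + 1)) * j / p ^ 2 = p ^ (2 * m) * j := by
      rw [show p ^ (2 * (m + 1)) * j = p ^ 2 * (p ^ (2 * m) * j) by ring,
        Nat.mul_div_cancel_left _ (by positivity)]
    have e2 : p ^ 2 * (p ^ (2 * (m + 1)) * j) = p ^ (2 * (m + 2)) * j := by ring
    rw [hT _ hpos, if_pos hdvd, hleg, e1, e2]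
    simp
  have key : ∀ n m : ℕ, Tn n (g (p ^ (2 * (n + m + 1)) * j))
      = ∑ t ∈ Finset.range (n + 1),
          ((p : ℤ) ^ t) • g (p ^ (2 * (m + 1) + 4 * t) * j) := by
    intro n
    induction n using Nat.twoStepInduction with
    | zero =>
      intro m
      simp [hTn0]
    | one =>
      intro m
      rw [hTn1, show 2 * (1 + m + 1) = 2 * ((m + 1) + 1) by ring, hstep (m + 1)]
      rw [Finset.sum_range_succ, Finset.sum_range_one]
      norm_num
      constructor <;> congr 2 <;> ring
    | more n ih2 ih1 =>
      intro m
      rw [hTnrec n]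
      simp only [LinearMap.sub_apply, LinearMap.comp_apply, LinearMap.smul_apply]
      rw [show 2 * (n + 2 + m + 1) = 2 * ((n + 1) + (m + 1) + 1) by ring, ih1 (m + 1)]
      rw [show 2 * ((n + 1) + (m + 1) + 1) = 2 * (n + (m + 2) + 1) by ring]
      rw [show ((p : ℤ) • Tn n) (g (p ^ (2 * (n + (m + 2) + 1)) * j))
        = (p : ℤ) • Tn n (g (p ^ (2 * (n + (m + 2) + 1)) * j)) from rfl]
      rw [ih2 (m + 2)]
      rw [map_sum]
      simp only [LinearMap.map_smul_of_tower]
      have hT' : ∀ t : ℕ, T (g (p ^ (2 * (m + 2) + 4 * t) * j))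
          = g (p ^ (2 * (m + 1) + 4 * t) * j)
            + (p : ℤ) • g (p ^ (2 * (m + 1) + 4 * (t + 1)) * j) := by
        intro t
        rw [show 2 * (m + 2) + 4 * t = 2 * ((m + 1 + 2 * t) + 1) by ring, hstep]
        congr 3 <;> ring
      simp only [hT']
      have dist : ∀ x : ℕ, ((p : ℤ) ^ x) • (g (p ^ (2 * (m + 1) + 4 * x) * j)
            + (p : ℤ) • g (p ^ (2 * (m + 1) + 4 * (x + 1)) * j))
          = ((p : ℤ) ^ x) • g (p ^ (2 * (m + 1) + 4 * x) * j)
            + ((p : ℤ) ^ (x + 1)) • g (p ^ (2 * (m + 1) + 4 * (x + 1)) * j) := by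
        intro x
        rw [zsmul_add, ← mul_zsmul, ← pow_succ]
      simp only [dist]
      rw [Finset.sum_add_distrib]
      have hsum : ((p : ℤ)) • ∑ t ∈ Finset.range (n + 1),
            ((p : ℤ) ^ t) • g (p ^ (2 * (m + 2 + 1) + 4 * t) * j)
          = ∑ t ∈ Finset.range (n + 1),
            ((p : ℤ) ^ (t + 1)) • g (p ^ (2 * (m + 1) + 4 * (t + 1)) * j) := by
        induction (n + 1) with
        | zero => simp
        | succ k ihk =>
          rw [Finset.sum_range_succ, Finset.sum_range_succ, zsmul_add, ihk, ← mul_zsmul,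
            show (p : ℤ) * (p : ℤ) ^ k = (p : ℤ) ^ (k + 1) by ring,
            show 2 * (m + 2 + 1) + 4 * k = 2 * (m + 1) + 4 * (k + 1) by ring]
      rw [hsum]
      rw [Finset.sum_range_succ
        (fun x => ((p : ℤ) ^ (x + 1)) • g (p ^ (2 * (m + 1) + 4 * (x + 1)) * j)) (n + 1)]
      rw [Finset.sum_range_succ
        (fun t => ((p : ℤ) ^ t) • g (p ^ (2 * (m + 1) + 4 * t) * j)) (n + 2)]
      abel
  obtain ⟨m, hm⟩ : ∃ m, v = n + m + 1 := ⟨v - n - 1, by omega⟩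
  subst hD hm
  rw [key n m]
  have : n + m + 1 - n = m + 1 := by omega
  rw [this]
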